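/- Let S be a compact topological space, let G be an abelian group, and let T : G → C(S, ℝ) be a group homomorphism whose image T(G) is dense in C(S, ℝ) with respect to the supremum norm. Then for all x₁, x₂, y₁, y₂ ∈ G satisfying (T xᵢ)(s) < (T yⱼ)(s) for every s ∈ S and all i, j ∈ {1, 2}, there exists z ∈ G such that (T xᵢ)(s) < (T z)(s) < (T yⱼ)(s) for every s ∈ S and all i, j ∈ {1, 2}. In particular, with the cone G₊ = {x ∈ G : (T x)(s) > 0 for all s ∈ S} ∪ {0}, the ordered group (G, G₊) has the strong Riesz interpolation property. -/
import Mathlib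


/-- Interpolation mechanism of Lemma 4.2(iii): if `T : G → C(S, ℝ)` has uniformly dense
image (`S` compact), then strict pointwise interpolation data in the image of `T` can be
interpolated by an element of `G`; in particular the ordered group with cone
`{x : T x > 0 on S} ∪ {0}` has the strong Riesz interpolation property. -/
theorem stmt_11 {S G : Type*} [TopologicalSpace S] [CompactSpace S] [AddCommGroup G]
    (T : G →+ C(S, ℝ))
    (hdense : ∀ f : C(S, ℝ), ∀ ε : ℝ, 0 < ε → ∃ x : G, ∀ s : S, |(T x) s - f s| < ε) :
    ∀ x₁ x₂ y₁ y₂ : G,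
      (∀ s : S, (T x₁) s < (T y₁) s) → (∀ s : S, (T x₁) s < (T y₂) s) →
      (∀ s : S, (T x₂) s < (T y₁) s) → (∀ s : S, (T x₂) s < (T y₂) s) →
      ∃ z : G, (∀ s : S, (T x₁) s < (T z) s) ∧ (∀ s : S, (T x₂) s < (T z) s) ∧
        (∀ s : S, (T z) s < (T y₁) s) ∧ (∀ s : S, (T z) s < (T y₂) s) := by
  intro x₁ x₂ y₁ y₂ h11 h12 h21 h22
  by_cases hS : Nonempty S
  · set a : C(S, ℝ) := T x₁ ⊔ T x₂ with ha
    set b : C(S, ℝ) := T y₁ ⊓ T y₂ with hb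
    have hab : ∀ s : S, a s < b s := by
      intro s
      simp only [ha, hb, ContinuousMap.sup_apply, ContinuousMap.inf_apply, sup_lt_iff,
        lt_inf_iff]
      exact ⟨⟨h11 s, h21 s⟩, h12 s, h22 s⟩
    set g : C(S, ℝ) := b - a with hg
    obtain ⟨s₀, -, hs₀⟩ := CompactSpace.isCompact_univ.exists_isMinOn
      (Set.univ_nonempty) g.continuous.continuousOn
    set δ : ℝ := g s₀ with hδ
    have hδpos : 0 < δ := by
      have := hab s₀
      simp only [hδ, hg, ContinuousMap.sub_apply]
      linarith
    have hgap : ∀ s : S, δ ≤ b s - a s := by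
      intro s
      have h := hs₀ (Set.mem_univ s)
      simp only [Set.mem_setOf_eq, hδ, hg, ContinuousMap.sub_apply] at h ⊢
      linarith
    obtain ⟨z, hz⟩ := hdense ((2⁻¹ : ℝ) • (a + b)) (δ / 2) (by linarith)
    refine ⟨z, fun s => ?_, fun s => ?_, fun s => ?_, fun s => ?_⟩ <;>
    · have h1 := hz s
      have h2 := hgap s
      simp only [ContinuousMap.smul_apply, ContinuousMap.add_apply, smul_eq_mul,
        abs_lt] at h1
      have ha1 : (T x₁) s ≤ a s := le_sup_left
      have ha2 : (T x₂) s ≤ a s := le_sup_right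
      have hb1 : b s ≤ (T y₁) s := inf_le_left
      have hb2 : b s ≤ (T y₂) s := inf_le_right
      have ha1' : a s = max ((T x₁) s) ((T x₂) s) := rfl
      linarith
  · obtain ⟨z, -⟩ := hdense 0 1 one_pos
    exact ⟨z, fun s => (hS ⟨s⟩).elim, fun s => (hS ⟨s⟩).elim,
      fun s => (hS ⟨s⟩).elim, fun s => (hS ⟨s⟩).elim⟩
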